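/- On the level set {G = 0} inside Q₊ one has c → +∞ as R → 0⁺; precisely, for every M > 0 there exists δ > 0 such that for all R, c with 0 < R < δ, c·θ_hl ≥ q·R and G(R, c) = 0, one has c > M. -/
import Mathlib


open Set Filter

/-- The transcendental function `G(R,c) = q(e^{cR} − 1 − cR) − c²(θ_ig e^{cR} − θ_hl)`. -/
noncomputable def G (q θig θhl R c : ℝ) : ℝ :=
  q * (Real.exp (c * R) - 1 - c * R) - c ^ 2 * (θig * Real.exp (c * R) - θhl)

/-- On the level set `{G = 0}` inside `Q₊`, `c → +∞` as `R → 0⁺`. -/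
theorem stmt10 (q θig θhl : ℝ) (hq : 0 < q) (h1 : 0 < θig) (h2 : θig < θhl) :
    ∀ M : ℝ, 0 < M → ∃ δ : ℝ, 0 < δ ∧
      ∀ R c : ℝ, 0 < R → R < δ → q * R ≤ c * θhl → G q θig θhl R c = 0 →
        M < c := by
  intro M hM
  have hθhl : 0 < θhl := h1.trans h2
  have hratio : 1 < θhl / θig := (one_lt_div h1).mpr h2
  have hlog : 0 < Real.log (θhl / θig) := Real.log_pos hratio
  refine ⟨Real.log (θhl / θig) / M, div_pos hlog hM, ?_⟩
  intro R c hR hRδ hqc hG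
  by_contra hc
  push_neg at hc
  have hc0 : 0 < c := by nlinarith [mul_pos hq hR]
  have hx : c * R < Real.log (θhl / θig) := by
    have h5 : c * R ≤ M * R := by nlinarith
    have h6 : M * R < M * (Real.log (θhl / θig) / M) := by nlinarith
    have h7 : M * (Real.log (θhl / θig) / M) = Real.log (θhl / θig) := by
      field_simp
    linarith
  have hexp : Real.exp (c * R) < θhl / θig := by
    rw [← Real.exp_log (lt_trans one_pos hratio)]
    exact Real.exp_lt_exp.mpr hx
  have h3 : θig * Real.exp (c * R) < θhl := by
    rw [lt_div_iff₀ h1] at hexp; linarith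
  have h4 : 0 ≤ Real.exp (c * R) - 1 - c * R := by
    linarith [Real.add_one_le_exp (c * R)]
  unfold G at hG
  nlinarith [mul_pos hc0 hc0, mul_pos (mul_pos hc0 hc0) (sub_pos.mpr h3)]
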